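/- If two guards p and q are both vertices incident to the same T-shaped region of a thin polyomino (a 1-wide horizontal bar of 3 cells with one cell attached below the middle), and both are needed so that together they r-cover the T-shape, then the geodesic L1 distance between p and q is at most 5. -/

import Mathlib

open Computability Turing

noncomputable section DispersiveAGP

/-- The point in the plane corresponding to an integer lattice point. -/
def toPt (v : ℤ × ℤ) : ℝ × ℝ := ((v.1 : ℝ), (v.2 : ℝ))

/-- The closed unit square (cell) with lower-left corner `c`. -/
def cellSet (c : ℤ × ℤ) : Set (ℝ × ℝ) :=
  Set.Icc (c.1 : ℝ) ((c.1 : ℝ) + 1) ×ˢ Set.Icc (c.2 : ℝ) ((c.2 : ℝ) + 1)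

/-- The region of the plane covered by a set of cells. -/
def region (C : Finset (ℤ × ℤ)) : Set (ℝ × ℝ) := ⋃ c ∈ C, cellSet c

/-- Two cells are adjacent if they share a side. -/
def cellAdj (c d : ℤ × ℤ) : Prop := (c.1 - d.1).natAbs + (c.2 - d.2).natAbs = 1

/-- A polyomino: a nonempty finite set of cells, edge-connected. -/
def IsPolyomino (C : Finset (ℤ × ℤ)) : Prop :=
  C.Nonempty ∧ ∀ c ∈ C, ∀ d ∈ C,
    Relation.ReflTransGen (fun a b => a ∈ C ∧ b ∈ C ∧ cellAdj a b) c d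

/-- Number of cells of `C` incident to the lattice point `v`. -/
def cornerCount (C : Finset (ℤ × ℤ)) (v : ℤ × ℤ) : ℕ :=
  (if (v.1 - 1, v.2 - 1) ∈ C then 1 else 0) + (if (v.1, v.2 - 1) ∈ C then 1 else 0) +
  (if (v.1 - 1, v.2) ∈ C then 1 else 0) + (if (v.1, v.2) ∈ C then 1 else 0)

/-- `v` is a vertex of the polyomino `C` (a corner point of its boundary). -/
def IsVertex (C : Finset (ℤ × ℤ)) (v : ℤ × ℤ) : Prop :=
  cornerCount C v = 1 ∨ cornerCount C v = 3 ∨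
    (cornerCount C v = 2 ∧
      (((v.1 - 1, v.2 - 1) ∈ C ∧ (v.1, v.2) ∈ C) ∨
        ((v.1 - 1, v.2) ∈ C ∧ (v.1, v.2 - 1) ∈ C)))

/-- r-visibility: `p` sees `q` if the spanned axis-aligned rectangle lies in the polyomino. -/
def rSees (C : Finset (ℤ × ℤ)) (p q : ℝ × ℝ) : Prop :=
  Set.uIcc p.1 q.1 ×ˢ Set.uIcc p.2 q.2 ⊆ region C

/-- The r-visibility region of a point. -/
def vis (C : Finset (ℤ × ℤ)) (p : ℝ × ℝ) : Set (ℝ × ℝ) := {q | rSees C p q}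

/-- A (vertex) guard set of a polyomino. -/
def IsGuardSet (C : Finset (ℤ × ℤ)) (G : Finset (ℤ × ℤ)) : Prop :=
  (∀ g ∈ G, IsVertex C g) ∧ ∀ p ∈ region C, ∃ g ∈ G, rSees C (toPt g) p

/-- L1 distance in the plane. -/
def l1 (p q : ℝ × ℝ) : ℝ := |p.1 - q.1| + |p.2 - q.2|

/-- The L1 length of a polygonal chain. -/
def chainLen (l : List (ℝ × ℝ)) : ℝ := ((l.zip l.tail).map fun p => l1 p.1 p.2).sum

/-- A polygonal chain all of whose segments lie inside `S`. -/
def IsChainIn (S : Set (ℝ × ℝ)) (l : List (ℝ × ℝ)) : Prop :=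
  (∀ p ∈ l, p ∈ S) ∧ List.Chain' (fun a b => segment ℝ a b ⊆ S) l

/-- Geodesic L1 distance inside `S`: infimum of L1 lengths of polygonal chains
inside `S` joining the two points. -/
def geodDist (S : Set (ℝ × ℝ)) (p q : ℝ × ℝ) : ℝ :=
  sInf {d | ∃ l : List (ℝ × ℝ), l.head? = some p ∧ l.getLast? = some q ∧
    IsChainIn S l ∧ d = chainLen l}

/-- Dispersion distance of a guard set: minimum pairwise geodesic L1 distance. -/
def dispersion (C : Finset (ℤ × ℤ)) (G : Finset (ℤ × ℤ)) : ℝ :=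
  sInf {d | ∃ g ∈ G, ∃ g' ∈ G, g ≠ g' ∧ d = geodDist (region C) (toPt g) (toPt g')}

/-- A polyomino is simple if its complement in the plane is connected (no holes). -/
def SimplePoly (C : Finset (ℤ × ℤ)) : Prop := IsConnected (region C)ᶜ

/-- A polyomino is thin if it contains no 2×2 block of cells. -/
def Thin (C : Finset (ℤ × ℤ)) : Prop :=
  ∀ x y : ℤ, ¬((x, y) ∈ C ∧ (x + 1, y) ∈ C ∧ (x, y + 1) ∈ C ∧ (x + 1, y + 1) ∈ C)

/-- The dual graph of a polyomino: cells as vertices, side-adjacency as edges. -/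
def dualGraph (C : Finset (ℤ × ℤ)) : SimpleGraph {c // c ∈ C} where
  Adj a b := cellAdj a.1 b.1
  symm := by
    constructor
    intro a b h
    unfold cellAdj at *
    omega
  loopless := by
    constructor
    intro a h
    unfold cellAdj at h
    omega

/-- A polyomino is tree-shaped if its dual graph is a tree. -/
def TreeShaped (C : Finset (ℤ × ℤ)) : Prop := (dualGraph C).IsTree


/-- The cells of the T-shaped region (T-tetromino). -/
def tCells : Finset (ℤ × ℤ) := {(0, 1), (1, 1), (2, 1), (1, 0)}

lemma mem_region_T {x y : ℝ}
    (h : (0 ≤ x ∧ x ≤ 3 ∧ 1 ≤ y ∧ y ≤ 2) ∨ (1 ≤ x ∧ x ≤ 2 ∧ 0 ≤ y ∧ y ≤ 1)) :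
    (x, y) ∈ region tCells := by
  have mem : ∀ c ∈ tCells, (x, y) ∈ cellSet c → (x, y) ∈ region tCells :=
    fun c hc hm => Set.mem_biUnion hc hm
  rcases h with ⟨hx0, hx3, hy1, hy2⟩ | ⟨hx1, hx2, hy0, hy1⟩
  · rcases le_or_gt x 1 with h1 | h1
    · refine mem (0, 1) (by decide) ?_
      simp only [cellSet, Set.mem_prod, Set.mem_Icc]
      push_cast
      refine ⟨⟨by linarith, by linarith⟩, by linarith, by linarith⟩
    · rcases le_or_gt x 2 with h2 | h2
      · refine mem (1, 1) (by decide) ?_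
        simp only [cellSet, Set.mem_prod, Set.mem_Icc]
        push_cast
        refine ⟨⟨by linarith, by linarith⟩, by linarith, by linarith⟩
      · refine mem (2, 1) (by decide) ?_
        simp only [cellSet, Set.mem_prod, Set.mem_Icc]
        push_cast
        refine ⟨⟨by linarith, by linarith⟩, by linarith, by linarith⟩
  · refine mem (1, 0) (by decide) ?_
    simp only [cellSet, Set.mem_prod, Set.mem_Icc]
    push_cast
    refine ⟨⟨by linarith, by linarith⟩, by linarith, by linarith⟩

lemma coordT (v : ℤ × ℤ) (h : toPt v ∈ region tCells) :
    (0 ≤ (v.1 : ℝ) ∧ (v.1 : ℝ) ≤ 3 ∧ 1 ≤ (v.2 : ℝ) ∧ (v.2 : ℝ) ≤ 2) ∨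
      (1 ≤ (v.1 : ℝ) ∧ (v.1 : ℝ) ≤ 2 ∧ 0 ≤ (v.2 : ℝ) ∧ (v.2 : ℝ) ≤ 1) := by
  simp only [region, tCells, toPt, cellSet, Set.mem_iUnion, Set.mem_prod, Set.mem_Icc,
    Finset.mem_insert, Finset.mem_singleton] at h
  obtain ⟨c, hc, hm⟩ := h
  rcases hc with rfl | rfl | rfl | rfl <;> push_cast at hm <;>
    [left; left; left; right] <;>
    exact ⟨by linarith [hm.1.1], by linarith [hm.1.2], by linarith [hm.2.1],
      by linarith [hm.2.2]⟩

lemma seg_sub_T {a b : ℝ × ℝ}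
    (hmem : ∀ x y : ℝ, min a.1 b.1 ≤ x → x ≤ max a.1 b.1 → min a.2 b.2 ≤ y →
      y ≤ max a.2 b.2 → (x, y) ∈ region tCells) :
    segment ℝ a b ⊆ region tCells := by
  rintro z ⟨u, v, hu, hv, huv, rfl⟩
  have h1 : (u • a + v • b).1 = u * a.1 + v * b.1 := by simp
  have h2 : (u • a + v • b).2 = u * a.2 + v * b.2 := by simp
  have key : ∀ s t : ℝ, min s t ≤ u * s + v * t ∧ u * s + v * t ≤ max s t := by
    intro s t
    have e1 : u * min s t + v * min s t = min s t := by rw [← add_mul, huv, one_mul]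
    have e2 : u * max s t + v * max s t = max s t := by rw [← add_mul, huv, one_mul]
    constructor
    · linarith [mul_le_mul_of_nonneg_left (min_le_left s t) hu,
        mul_le_mul_of_nonneg_left (min_le_right s t) hv]
    · linarith [mul_le_mul_of_nonneg_left (le_max_left s t) hu,
        mul_le_mul_of_nonneg_left (le_max_right s t) hv]
  have := hmem (u * a.1 + v * b.1) (u * a.2 + v * b.2)
    (key a.1 b.1).1 (key a.1 b.1).2 (key a.2 b.2).1 (key a.2 b.2).2
  rwa [show (u * a.1 + v * b.1, u * a.2 + v * b.2) = u • a + v • b by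
    rw [Prod.ext_iff]; exact ⟨h1.symm, h2.symm⟩] at this

/-- If two guards at vertices incident to a T-shaped region of a thin polyomino are
both needed to jointly r-cover the T-shape, then their geodesic L1 distance is at
most 5. -/
theorem tShape_coverers_within_distance_five
    (C : Finset (ℤ × ℤ)) (hC : IsPolyomino C) (hthin : Thin C)
    (hT : tCells ⊆ C) (p q : ℤ × ℤ)
    (hp : IsVertex C p) (hq : IsVertex C q)
    (hpT : toPt p ∈ region tCells) (hqT : toPt q ∈ region tCells)
    (hcover : ∀ x ∈ region tCells, rSees C (toPt p) x ∨ rSees C (toPt q) x)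
    (hpblock : ¬∀ x ∈ region tCells, rSees C (toPt p) x)
    (hqblock : ¬∀ x ∈ region tCells, rSees C (toPt q) x) :
    geodDist (region C) (toPt p) (toPt q) ≤ 5 := by
  have hsub : region tCells ⊆ region C := by
    intro x hx
    simp only [region, Set.mem_iUnion] at hx ⊢
    obtain ⟨c, hc, hx⟩ := hx
    exact ⟨c, hT hc, hx⟩
  obtain hP := coordT p hpT
  obtain hQ := coordT q hqT
  have hp1 : 0 ≤ (p.1 : ℝ) := by rcases hP with h | h <;> linarith [h.1]
  have hp2 : (p.1 : ℝ) ≤ 3 := by rcases hP with h | h <;> linarith [h.2.1]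
  have hp3 : 0 ≤ (p.2 : ℝ) := by rcases hP with h | h <;> linarith [h.2.2.1]
  have hp4 : (p.2 : ℝ) ≤ 2 := by rcases hP with h | h <;> linarith [h.2.2.2]
  have hq1 : 0 ≤ (q.1 : ℝ) := by rcases hQ with h | h <;> linarith [h.1]
  have hq2 : (q.1 : ℝ) ≤ 3 := by rcases hQ with h | h <;> linarith [h.2.1]
  have hq3 : 0 ≤ (q.2 : ℝ) := by rcases hQ with h | h <;> linarith [h.2.2.1]
  have hq4 : (q.2 : ℝ) ≤ 2 := by rcases hQ with h | h <;> linarith [h.2.2.2]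
  set l : List (ℝ × ℝ) :=
    [toPt p, ((p.1 : ℝ), 1), ((q.1 : ℝ), 1), toPt q] with hl
  -- vertical segment lemma
  have vert : ∀ v : ℤ × ℤ,
      ((0 ≤ (v.1 : ℝ) ∧ (v.1 : ℝ) ≤ 3 ∧ 1 ≤ (v.2 : ℝ) ∧ (v.2 : ℝ) ≤ 2) ∨
        (1 ≤ (v.1 : ℝ) ∧ (v.1 : ℝ) ≤ 2 ∧ 0 ≤ (v.2 : ℝ) ∧ (v.2 : ℝ) ≤ 1)) →
      segment ℝ (toPt v) ((v.1 : ℝ), 1) ⊆ region tCells := by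
    intro v hv
    apply seg_sub_T
    intro x y hx1 hx2 hy1 hy2
    simp only [toPt, min_self, max_self] at hx1 hx2
    have hxv : x = (v.1 : ℝ) := le_antisymm hx2 hx1
    subst hxv
    rcases hv with ⟨h1, h2, h3, h4⟩ | ⟨h1, h2, h3, h4⟩
    · apply mem_region_T
      left
      have : (1 : ℝ) ≤ min ((v.2 : ℝ)) 1 := le_min h3 le_rfl
      have : max ((v.2 : ℝ)) 1 ≤ 2 := max_le h4 (by norm_num)
      simp only [toPt] at hy1 hy2
      exact ⟨h1, h2, by linarith, by linarith⟩
    · apply mem_region_T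
      right
      have : (0 : ℝ) ≤ min ((v.2 : ℝ)) 1 := le_min h3 (by norm_num)
      have : max ((v.2 : ℝ)) 1 ≤ 1 := max_le h4 le_rfl
      simp only [toPt] at hy1 hy2
      exact ⟨h1, h2, by linarith, by linarith⟩
  -- horizontal segment
  have horiz : segment ℝ ((p.1 : ℝ), 1) ((q.1 : ℝ), 1) ⊆ region tCells := by
    apply seg_sub_T
    intro x y hx1 hx2 hy1 hy2
    simp only [min_self, max_self] at hy1 hy2
    have hyv : y = 1 := le_antisymm hy2 hy1
    subst hyv
    apply mem_region_T
    left
    have h1 : (0 : ℝ) ≤ min ((p.1 : ℝ)) ((q.1 : ℝ)) := le_min hp1 hq1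
    have h2 : max ((p.1 : ℝ)) ((q.1 : ℝ)) ≤ 3 := max_le hp2 hq2
    exact ⟨by linarith, by linarith, le_rfl, by norm_num⟩
  have hchain : IsChainIn (region C) l := by
    constructor
    · intro x hx
      simp only [hl, List.mem_cons, List.not_mem_nil, or_false] at hx
      rcases hx with rfl | rfl | rfl | rfl
      · exact hsub hpT
      · exact hsub (mem_region_T (Or.inl ⟨hp1, hp2, le_rfl, by norm_num⟩))
      · exact hsub (mem_region_T (Or.inl ⟨hq1, hq2, le_rfl, by norm_num⟩))
      · exact hsub hqT
    · refine List.isChain_cons_cons.mpr ⟨?_, List.isChain_cons_cons.mpr ⟨?_, List.isChain_cons_cons.mpr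
        ⟨?_, List.isChain_singleton _⟩⟩⟩
      · exact fun z hz => hsub (vert p hP hz)
      · exact fun z hz => hsub (horiz hz)
      · intro z hz
        rw [segment_symm] at hz
        exact hsub (vert q hQ hz)
  have hlen : chainLen l ≤ 5 := by
    have e : chainLen l = |(p.2 : ℝ) - 1| + |(p.1 : ℝ) - (q.1 : ℝ)| + |1 - (q.2 : ℝ)| := by
      simp [hl, chainLen, l1, toPt]
      ring
    have b1 : |(p.2 : ℝ) - 1| ≤ 1 := abs_le.mpr ⟨by linarith, by linarith⟩
    have b2 : |(p.1 : ℝ) - (q.1 : ℝ)| ≤ 3 := abs_le.mpr ⟨by linarith, by linarith⟩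
    have b3 : |1 - (q.2 : ℝ)| ≤ 1 := abs_le.mpr ⟨by linarith, by linarith⟩
    linarith [e.le]
  have hmemS : chainLen l ∈ {d | ∃ l' : List (ℝ × ℝ), l'.head? = some (toPt p) ∧
      l'.getLast? = some (toPt q) ∧ IsChainIn (region C) l' ∧ d = chainLen l'} :=
    ⟨l, by simp [hl], by simp [hl], hchain, rfl⟩
  have hbdd : BddBelow {d | ∃ l' : List (ℝ × ℝ), l'.head? = some (toPt p) ∧
      l'.getLast? = some (toPt q) ∧ IsChainIn (region C) l' ∧ d = chainLen l'} := by
    refine ⟨0, ?_⟩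
    rintro d ⟨l', -, -, -, rfl⟩
    apply List.sum_nonneg
    intro x hx
    simp only [List.mem_map] at hx
    obtain ⟨y, -, rfl⟩ := hx
    exact add_nonneg (abs_nonneg _) (abs_nonneg _)
  calc geodDist (region C) (toPt p) (toPt q) ≤ chainLen l := csInf_le hbdd hmemS
    _ ≤ 5 := hlen

end DispersiveAGP
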